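/- For all k ≥ 0 and all n < 2^k - 1, g(n) < g(2^k - 1), where g(n) is the number of odd coefficients of (1+x+x^2)^n; i.e., g(2^k - 1) = (2^(k+2) - (-1)^k)/3 is a strict maximum among g(0),...,g(2^k - 2). -/

import Mathlib

open Polynomial Finset

/-- The number of odd coefficients of a polynomial over ℤ. -/
noncomputable def oddCoeffCount (p : Polynomial ℤ) : ℕ :=
  (p.support.filter fun j => Odd (p.coeff j)).card

noncomputable def g (n : ℕ) : ℕ := oddCoeffCount ((1 + X + X ^ 2) ^ n)

namespace Stmt11Aux

noncomputable def P2 : Polynomial (ZMod 2) := 1 + X + X ^ 2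
noncomputable def U (n : ℕ) : ℕ := (P2 ^ n).support.card
noncomputable def V (n : ℕ) : ℕ := ((1 + X) * P2 ^ n).support.card

lemma sq_eq_expand (q : Polynomial (ZMod 2)) : q ^ 2 = expand (ZMod 2) 2 q := by
  have h := Polynomial.map_frobenius_expand 2 q
  rw [ZMod.frobenius_zmod, Polynomial.map_id] at h
  exact h.symm

lemma coeff_split_even (q r : Polynomial (ZMod 2)) (m : ℕ) :
    (expand (ZMod 2) 2 q + X * expand (ZMod 2) 2 r).coeff (2 * m) = q.coeff m := by
  rw [coeff_add, Polynomial.coeff_expand (by norm_num), if_pos ⟨m, rfl⟩]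
  rcases Nat.eq_zero_or_pos m with hm | hm
  · simp [hm]
  · have : 2 * m = (2 * m - 1) + 1 := by omega
    rw [this, Polynomial.coeff_X_mul, Polynomial.coeff_expand (by norm_num),
      if_neg (by omega), add_zero]
    congr 1
    omega

lemma coeff_split_odd (q r : Polynomial (ZMod 2)) (m : ℕ) :
    (expand (ZMod 2) 2 q + X * expand (ZMod 2) 2 r).coeff (2 * m + 1) = r.coeff m := by
  rw [coeff_add, Polynomial.coeff_expand (by norm_num), if_neg (by omega),
    Polynomial.coeff_X_mul, Polynomial.coeff_expand (by norm_num),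
    if_pos ⟨m, rfl⟩, zero_add]
  congr 1
  omega

lemma card_split (q r : Polynomial (ZMod 2)) :
    (expand (ZMod 2) 2 q + X * expand (ZMod 2) 2 r).support.card
      = q.support.card + r.support.card := by
  have hsupp : (expand (ZMod 2) 2 q + X * expand (ZMod 2) 2 r).support
      = q.support.image (fun m => 2 * m) ∪ r.support.image (fun m => 2 * m + 1) := by
    ext j
    rcases Nat.even_or_odd j with ⟨m, hm⟩ | ⟨m, hm⟩
    · subst hm
      simp only [mem_support_iff, mem_union, mem_image]
      rw [show m + m = 2 * m by ring, coeff_split_even]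
      constructor
      · intro h; exact Or.inl ⟨m, by simpa using h, rfl⟩
      · rintro (⟨a, ha, hae⟩ | ⟨a, ha, hae⟩)
        · obtain rfl : a = m := by omega
          simpa using ha
        · omega
    · subst hm
      simp only [mem_support_iff, mem_union, mem_image]
      rw [coeff_split_odd]
      constructor
      · intro h; exact Or.inr ⟨m, by simpa using h, rfl⟩
      · rintro (⟨a, ha, hae⟩ | ⟨a, ha, hae⟩)
        · omega
        · obtain rfl : a = m := by omega
          simpa using ha
  rw [hsupp, Finset.card_union_of_disjoint, Finset.card_image_of_injective _
      (fun a b h => by omega), Finset.card_image_of_injective _ (fun a b h => by omega)]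
  · rw [Finset.disjoint_left]
    rintro j hj hj'
    simp only [mem_image] at hj hj'
    obtain ⟨a, _, rfl⟩ := hj
    obtain ⟨b, _, hb⟩ := hj'
    omega

lemma urec_even (n : ℕ) : U (2 * n) = U n := by
  have h : P2 ^ (2 * n) = expand (ZMod 2) 2 (P2 ^ n) + X * expand (ZMod 2) 2 0 := by
    rw [map_zero, mul_zero, add_zero, ← sq_eq_expand, ← pow_mul, mul_comm]
  rw [U, h, card_split]
  simp [U]

lemma urec_odd (n : ℕ) : U (2 * n + 1) = V n + U n := by
  have h : P2 ^ (2 * n + 1)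
      = expand (ZMod 2) 2 ((1 + X) * P2 ^ n) + X * expand (ZMod 2) 2 (P2 ^ n) := by
    rw [map_mul, map_add, map_one, expand_X, pow_succ, ← sq_eq_expand, ← pow_mul]
    rw [show P2 ^ (n * 2) = P2 ^ (2 * n) from by ring_nf]
    rw [show (P2 ^ (2*n)) = ((P2 ^ n) ^ 2 : _) from by rw [← pow_mul, mul_comm]]
    rw [P2]
    ring
  rw [U, h, card_split]
  rfl

lemma vrec_even (n : ℕ) : V (2 * n) = 2 * U n := by
  have h : (1 + X) * P2 ^ (2 * n)
      = expand (ZMod 2) 2 (P2 ^ n) + X * expand (ZMod 2) 2 (P2 ^ n) := by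
    rw [← sq_eq_expand, ← pow_mul, mul_comm n 2]
    ring
  rw [V, h, card_split]
  rw [U]; ring

lemma X_mul_card (q : Polynomial (ZMod 2)) : (X * q).support.card = q.support.card := by
  have hsupp : (X * q).support = q.support.image (fun m => m + 1) := by
    ext j
    cases j with
    | zero => simp
    | succ m =>
        simp only [mem_support_iff, mem_image, Polynomial.coeff_X_mul]
        constructor
        · intro h; exact ⟨m, h, rfl⟩
        · rintro ⟨a, ha, hae⟩
          obtain rfl : a = m := by omega
          exact ha
  rw [hsupp, Finset.card_image_of_injective _ (fun a b h => by omega)]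

lemma vrec_odd (n : ℕ) : V (2 * n + 1) = 2 * U n := by
  have h2 : (2 : Polynomial (ZMod 2)) = 0 := by
    rw [← map_ofNat (C : ZMod 2 →+* Polynomial (ZMod 2)) 2,
      show (OfNat.ofNat 2 : ZMod 2) = 0 from rfl, map_zero]
  have key : ((1 + X : Polynomial (ZMod 2)) * P2) = 1 + X ^ 3 := by
    rw [P2]
    linear_combination (X + X ^ 2 : Polynomial (ZMod 2)) * h2
  have h : (1 + X) * P2 ^ (2 * n + 1)
      = expand (ZMod 2) 2 (P2 ^ n) + X * expand (ZMod 2) 2 (X * P2 ^ n) := by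
    rw [map_mul, expand_X, pow_succ, ← mul_assoc, mul_comm ((1+X : Polynomial (ZMod 2))) _,
      mul_assoc, key, ← sq_eq_expand, ← pow_mul, mul_comm n 2]
    ring
  rw [V, h, card_split, X_mul_card, U, two_mul]

lemma vhalf (n : ℕ) : V n = 2 * U (n / 2) := by
  rcases Nat.even_or_odd n with ⟨m, hm⟩ | ⟨m, hm⟩
  · subst hm
    rw [show (m + m) / 2 = m from by omega, show m + m = 2 * m from by ring, vrec_even]
  · subst hm
    rw [show (2 * m + 1) / 2 = m from by omega, vrec_odd]

lemma P2_ne_zero : P2 ≠ 0 := fun h => by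
  have : P2.coeff 0 = 1 := by rw [P2]; simp
  rw [h] at this
  simp at this

lemma U_pos (n : ℕ) : 1 ≤ U n := by
  rw [U, Nat.one_le_iff_ne_zero, Ne, Polynomial.card_support_eq_zero]
  exact pow_ne_zero _ P2_ne_zero

lemma U0 : U 0 = 1 := by
  rw [U, pow_zero, ← C_1, Polynomial.support_C one_ne_zero]
  rfl

lemma U1 : U 1 = 3 := by
  have h1 := urec_odd 0
  have h2 := vhalf 0
  norm_num at h1 h2
  have := U0
  omega

lemma mrec (k : ℕ) : U (2 ^ (k + 2) - 1) = U (2 ^ (k + 1) - 1) + 2 * U (2 ^ k - 1) := by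
  have p1 : 2 ^ (k + 2) = 2 * 2 ^ (k + 1) := by ring
  have p2 : 2 ^ (k + 1) = 2 * 2 ^ k := by ring
  have p3 : 1 ≤ 2 ^ k := Nat.one_le_two_pow
  have h1 : 2 ^ (k + 2) - 1 = 2 * (2 ^ (k + 1) - 1) + 1 := by omega
  have h2 : (2 ^ (k + 1) - 1) / 2 = 2 ^ k - 1 := by omega
  rw [h1, urec_odd, vhalf, h2]
  omega

lemma main : ∀ k : ℕ, ∀ n : ℕ, n < 2 ^ k →
    U n ≤ U (2 ^ k - 1) ∧ (U n = U (2 ^ k - 1) → n = 2 ^ k - 1) := by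
  intro k
  induction k using Nat.strong_induction_on with
  | _ k ih =>
    match k with
    | 0 =>
        intro n hn
        interval_cases n
        exact ⟨le_refl _, fun _ => rfl⟩
    | 1 =>
        intro n hn
        interval_cases n
        · exact ⟨by simp [U0, U1], by simp [U0, U1]⟩
        · exact ⟨le_refl _, fun _ => rfl⟩
    | (k + 2) =>
        intro n hn
        have ih1 := ih (k + 1) (by omega)
        have ih0 := ih k (by omega)
        have hm := mrec k
        have hpos := U_pos (2 ^ k - 1)
        have p1 : 2 ^ (k + 2) = 2 * 2 ^ (k + 1) := by ring
        have p2 : 2 ^ (k + 1) = 2 * 2 ^ k := by ring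
        have p3 : 1 ≤ 2 ^ k := Nat.one_le_two_pow
        rcases Nat.even_or_odd n with ⟨m, hmm⟩ | ⟨m, hmm⟩
        · have hmlt : m < 2 ^ (k + 1) := by omega
          have h1 := (ih1 m hmlt).1
          have heq : U n = U m := by
            rw [hmm, show m + m = 2 * m from by ring, urec_even]
          constructor
          · omega
          · intro h; omega
        · subst hmm
          have hmlt : m < 2 ^ (k + 1) := by omega
          have hhalf : m / 2 < 2 ^ k := by omega
          have h1 := ih1 m hmlt
          have h0 := ih0 (m / 2) hhalf
          have heq : U (2 * m + 1) = V m + U m := urec_odd m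
          have hv := vhalf m
          constructor
          · omega
          · intro h
            have e1 : U m = U (2 ^ (k + 1) - 1) := by omega
            have e2 : U (m / 2) = U (2 ^ k - 1) := by omega
            have hm1 : m = 2 ^ (k + 1) - 1 := h1.2 e1
            omega

lemma g_eq_U (n : ℕ) : g n = U n := by
  rw [g, oddCoeffCount, U]
  have hmap : Polynomial.map (Int.castRingHom (ZMod 2)) ((1 + X + X ^ 2 : Polynomial ℤ) ^ n)
      = P2 ^ n := by
    rw [Polynomial.map_pow, Polynomial.map_add, Polynomial.map_add, Polynomial.map_one,
      Polynomial.map_pow, Polynomial.map_X, P2]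
  rw [← hmap]
  set p := ((1 + X + X ^ 2 : Polynomial ℤ) ^ n)
  congr 1
  ext j
  simp only [Finset.mem_filter, mem_support_iff, Polynomial.coeff_map]
  constructor
  · rintro ⟨-, hodd⟩
    rw [Int.odd_iff] at hodd
    intro hc
    rw [show ((Int.castRingHom (ZMod 2)) (p.coeff j)) = ((p.coeff j : ℤ) : ZMod 2) from rfl,
      ZMod.intCast_zmod_eq_zero_iff_dvd] at hc
    omega
  · intro hc
    have hodd : Odd (p.coeff j) := by
      rw [Int.odd_iff]
      by_contra h
      have h2 : (2 : ℤ) ∣ p.coeff j := by omega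
      exact hc (by rwa [show ((Int.castRingHom (ZMod 2)) (p.coeff j)) = ((p.coeff j : ℤ) : ZMod 2) from rfl, ZMod.intCast_zmod_eq_zero_iff_dvd])
    exact ⟨fun h0 => by simp [h0] at hodd, hodd⟩

lemma formula : ∀ k : ℕ, (3 : ℤ) * U (2 ^ k - 1) = 2 ^ (k + 2) - (-1) ^ k := by
  intro k
  induction k using Nat.strong_induction_on with
  | _ k ih =>
    match k with
    | 0 => norm_num [U0]
    | 1 => norm_num [U1]
    | (k + 2) =>
        have ih1 := ih (k + 1) (by omega)
        have ih0 := ih k (by omega)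
        have hm := mrec k
        have : (U (2 ^ (k+2) - 1) : ℤ) = (U (2 ^ (k+1) - 1) : ℤ) + 2 * (U (2 ^ k - 1) : ℤ) := by
          exact_mod_cast congrArg (Nat.cast : ℕ → ℤ) hm
        rw [mul_comm] at ih1 ih0 ⊢
        rw [this]
        ring_nf
        ring_nf at ih1 ih0
        linarith [ih1, ih0]

end Stmt11Aux

open Stmt11Aux in
theorem stmt_11 : ∀ k : ℕ, (∀ n : ℕ, n < 2 ^ k - 1 → g n < g (2 ^ k - 1)) ∧
    (3 : ℤ) * g (2 ^ k - 1) = 2 ^ (k + 2) - (-1) ^ k := by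
  intro k
  constructor
  · intro n hn
    have h := main k n (by omega)
    rw [g_eq_U, g_eq_U]
    rcases lt_or_eq_of_le h.1 with hlt | heq
    · exact hlt
    · exact absurd (h.2 heq) (by omega)
  · rw [g_eq_U]
    exact formula k
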